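/- Let H be a complex Hilbert space and let M_1, M_2, N_1, N_2 be closed subspaces of H such that M_1 ⊥ M_2, M_1 ⊥ N_2, M_2 ⊥ N_1 and N_1 ⊥ N_2. Then c_e(M_1 ⊕ M_2, N_1 ⊕ N_2) = max( c_e(M_1, N_1), c_e(M_2, N_2) ), where M_1 ⊕ M_2 and N_1 ⊕ N_2 denote the (closed) sums of the respective orthogonal subspaces. -/

import Mathlib

/-- The orthogonal projection onto a subspace `K` of a complex inner product space,
as a bounded operator on the whole space (junk value `0` if `K` does not admit an
orthogonal projection; for a closed subspace of a Hilbert space it is the genuine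
orthogonal projection). -/
noncomputable def proj {H : Type*} [NormedAddCommGroup H] [InnerProductSpace ℂ H]
    (K : Submodule ℂ H) : H →L[ℂ] H :=
  letI := Classical.propDecidable (K.HasOrthogonalProjection)
  if h : K.HasOrthogonalProjection then
    haveI := h
    K.subtypeL.comp (K.orthogonalProjectionOnto)
  else 0

/-- The cosine of the essential Friedrichs angle between two (closed) subspaces `M`, `N`:
the infimum over compact operators `K` of `‖P_M P_N - P_{M ∩ N} + K‖`, i.e. the norm of
the class of `P_M P_N - P_{M ∩ N}` in the Calkin algebra. -/
noncomputable def essFriedrichs {H : Type*} [NormedAddCommGroup H] [InnerProductSpace ℂ H]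
    (M N : Submodule ℂ H) : ℝ :=
  ⨅ K : {T : H →L[ℂ] H // IsCompactOperator ⇑T},
    ‖proj M * proj N - proj (M ⊓ N) + (K : H →L[ℂ] H)‖

section Aux

variable {H : Type*} [NormedAddCommGroup H] [InnerProductSpace ℂ H]

lemma proj_apply (K : Submodule ℂ H) [h : Submodule.HasOrthogonalProjection K] (x : H) :
    proj K x = (K.orthogonalProjectionOnto x : H) := by
  simp only [proj, dif_pos h]; rfl

lemma proj_mem (K : Submodule ℂ H) [Submodule.HasOrthogonalProjection K] (x : H) : proj K x ∈ K := by
  rw [proj_apply]; exact (K.orthogonalProjectionOnto x).2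

lemma sub_proj_mem (K : Submodule ℂ H) [Submodule.HasOrthogonalProjection K] (x : H) :
    x - proj K x ∈ Kᗮ := by
  rw [proj_apply]; exact Submodule.sub_starProjection_mem_orthogonal x

lemma proj_eq_self (K : Submodule ℂ H) [Submodule.HasOrthogonalProjection K] {x : H} (hx : x ∈ K) :
    proj K x = x := by
  rw [proj_apply]; exact Submodule.starProjection_eq_self_iff.2 hx

lemma proj_eq_zero (K : Submodule ℂ H) [Submodule.HasOrthogonalProjection K] {x : H} (hx : x ∈ Kᗮ) :
    proj K x = 0 := by
  rw [proj_apply]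
  have : K.orthogonalProjectionOnto x = 0 := Submodule.orthogonalProjectionOnto_eq_zero_iff.2 hx
  rw [this]; rfl

lemma norm_proj_apply_le (K : Submodule ℂ H) [Submodule.HasOrthogonalProjection K] (x : H) :
    ‖proj K x‖ ≤ ‖x‖ := by
  rw [proj_apply]
  calc ‖(K.orthogonalProjectionOnto x : H)‖ = ‖K.orthogonalProjectionOnto x‖ := rfl
    _ ≤ ‖K.orthogonalProjectionOnto‖ * ‖x‖ := (K.orthogonalProjectionOnto).le_opNorm x
    _ ≤ 1 * ‖x‖ :=
        mul_le_mul_of_nonneg_right (Submodule.orthogonalProjectionOnto_norm_le K) (norm_nonneg x)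
    _ = ‖x‖ := one_mul _

lemma mem_orthogonal_sup {A B : Submodule ℂ H} {v : H} (hA : v ∈ Aᗮ) (hB : v ∈ Bᗮ) :
    v ∈ (A ⊔ B)ᗮ := by
  rw [Submodule.mem_orthogonal]
  intro u hu
  rcases Submodule.mem_sup.1 hu with ⟨a, ha, b, hb, rfl⟩
  rw [inner_add_left, hA a ha, hB b hb, add_zero]

lemma sub_proj_add_proj_mem (A B : Submodule ℂ H) [Submodule.HasOrthogonalProjection A]
    [Submodule.HasOrthogonalProjection B]
    (hAB : ∀ x ∈ A, ∀ y ∈ B, (inner ℂ x y : ℂ) = 0) (v : H) :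
    v - (proj A v + proj B v) ∈ (A ⊔ B)ᗮ := by
  refine mem_orthogonal_sup ?_ ?_
  · have h1 : v - proj A v ∈ Aᗮ := sub_proj_mem A v
    have h2 : proj B v ∈ Aᗮ := by
      rw [Submodule.mem_orthogonal]
      intro u hu
      exact hAB u hu _ (proj_mem B v)
    have := Aᗮ.sub_mem h1 h2
    simpa [sub_sub] using this
  · have h1 : v - proj B v ∈ Bᗮ := sub_proj_mem B v
    have h2 : proj A v ∈ Bᗮ := by
      rw [Submodule.mem_orthogonal]
      intro u hu
      rw [inner_eq_zero_symm]
      exact hAB _ (proj_mem A v) u hu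
    have h3 := Bᗮ.sub_mem h1 h2
    have e : v - proj B v - proj A v = v - (proj A v + proj B v) := by abel
    rwa [e] at h3

lemma hasOrthogonalProjection_sup (A B : Submodule ℂ H) [Submodule.HasOrthogonalProjection A]
    [Submodule.HasOrthogonalProjection B]
    (hAB : ∀ x ∈ A, ∀ y ∈ B, (inner ℂ x y : ℂ) = 0) :
    Submodule.HasOrthogonalProjection (A ⊔ B) :=
  ⟨fun v => ⟨proj A v + proj B v,
    Submodule.add_mem_sup (proj_mem A v) (proj_mem B v),
    sub_proj_add_proj_mem A B hAB v⟩⟩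

lemma proj_sup_apply (A B : Submodule ℂ H) [Submodule.HasOrthogonalProjection A]
    [Submodule.HasOrthogonalProjection B] [Submodule.HasOrthogonalProjection (A ⊔ B)]
    (hAB : ∀ x ∈ A, ∀ y ∈ B, (inner ℂ x y : ℂ) = 0) (x : H) :
    proj (A ⊔ B) x = proj A x + proj B x := by
  rw [proj_apply]
  exact Submodule.eq_starProjection_of_mem_orthogonal
    (Submodule.add_mem_sup (proj_mem A x) (proj_mem B x))
    (sub_proj_add_proj_mem A B hAB x)

lemma norm_proj_comp_proj_le (A B : Submodule ℂ H) [Submodule.HasOrthogonalProjection A]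
    [Submodule.HasOrthogonalProjection B] (S : H →L[ℂ] H) :
    ‖(proj A).comp (S.comp (proj B))‖ ≤ ‖S‖ := by
  refine ContinuousLinearMap.opNorm_le_bound _ (norm_nonneg S) fun x => ?_
  calc ‖((proj A).comp (S.comp (proj B))) x‖ = ‖proj A (S (proj B x))‖ := rfl
    _ ≤ ‖S (proj B x)‖ := norm_proj_apply_le _ _
    _ ≤ ‖S‖ * ‖proj B x‖ := S.le_opNorm _
    _ ≤ ‖S‖ * ‖x‖ :=
        mul_le_mul_of_nonneg_left (norm_proj_apply_le _ _) (norm_nonneg S)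

lemma norm_add_le_max_aux {M₁ M₂ N₁ N₂ : Submodule ℂ H}
    [Submodule.HasOrthogonalProjection N₁] [Submodule.HasOrthogonalProjection N₂]
    [Submodule.HasOrthogonalProjection (N₁ ⊔ N₂)]
    (hMM : ∀ x ∈ M₁, ∀ y ∈ M₂, (inner ℂ x y : ℂ) = 0)
    (hNN : ∀ x ∈ N₁, ∀ y ∈ N₂, (inner ℂ x y : ℂ) = 0)
    {A B : H →L[ℂ] H}
    (hA : ∀ x, A x ∈ M₁) (hB : ∀ x, B x ∈ M₂)
    (hAQ : ∀ x, A (proj N₁ x) = A x) (hBQ : ∀ x, B (proj N₂ x) = B x) :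
    ‖A + B‖ ≤ max ‖A‖ ‖B‖ := by
  set m := max ‖A‖ ‖B‖ with hm
  have hm0 : 0 ≤ m := le_trans (norm_nonneg A) (le_max_left _ _)
  refine ContinuousLinearMap.opNorm_le_bound _ hm0 fun x => ?_
  rw [ContinuousLinearMap.add_apply]
  have h1 : ‖A x‖ ≤ m * ‖proj N₁ x‖ := by
    rw [← hAQ x]
    exact le_trans (A.le_opNorm _)
      (mul_le_mul_of_nonneg_right (le_max_left _ _) (norm_nonneg _))
  have h2 : ‖B x‖ ≤ m * ‖proj N₂ x‖ := by
    rw [← hBQ x]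
    exact le_trans (B.le_opNorm _)
      (mul_le_mul_of_nonneg_right (le_max_right _ _) (norm_nonneg _))
  have h3 : ‖A x + B x‖ * ‖A x + B x‖ = ‖A x‖ * ‖A x‖ + ‖B x‖ * ‖B x‖ :=
    norm_add_sq_eq_norm_sq_add_norm_sq_of_inner_eq_zero _ _ (hMM _ (hA x) _ (hB x))
  have h4 : ‖proj N₁ x + proj N₂ x‖ * ‖proj N₁ x + proj N₂ x‖ =
      ‖proj N₁ x‖ * ‖proj N₁ x‖ + ‖proj N₂ x‖ * ‖proj N₂ x‖ :=
    norm_add_sq_eq_norm_sq_add_norm_sq_of_inner_eq_zero _ _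
      (hNN _ (proj_mem N₁ x) _ (proj_mem N₂ x))
  have h5 : ‖proj N₁ x + proj N₂ x‖ ≤ ‖x‖ := by
    rw [← proj_sup_apply N₁ N₂ hNN x]; exact norm_proj_apply_le _ _
  have e1 : ‖A x‖ * ‖A x‖ ≤ (m * ‖proj N₁ x‖) * (m * ‖proj N₁ x‖) :=
    mul_le_mul h1 h1 (norm_nonneg _) (mul_nonneg hm0 (norm_nonneg _))
  have e2 : ‖B x‖ * ‖B x‖ ≤ (m * ‖proj N₂ x‖) * (m * ‖proj N₂ x‖) :=
    mul_le_mul h2 h2 (norm_nonneg _) (mul_nonneg hm0 (norm_nonneg _))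
  have e3 : ‖proj N₁ x + proj N₂ x‖ * ‖proj N₁ x + proj N₂ x‖ ≤ ‖x‖ * ‖x‖ :=
    mul_le_mul h5 h5 (norm_nonneg _) (norm_nonneg _)
  have h6 : (m * ‖proj N₁ x‖) * (m * ‖proj N₁ x‖) + (m * ‖proj N₂ x‖) * (m * ‖proj N₂ x‖)
      = (m * m) * (‖proj N₁ x + proj N₂ x‖ * ‖proj N₁ x + proj N₂ x‖) := by
    rw [h4]; ring
  have h7 : (m * m) * (‖proj N₁ x + proj N₂ x‖ * ‖proj N₁ x + proj N₂ x‖)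
      ≤ (m * m) * (‖x‖ * ‖x‖) :=
    mul_le_mul_of_nonneg_left e3 (mul_nonneg hm0 hm0)
  have h8 : (m * m) * (‖x‖ * ‖x‖) = (m * ‖x‖) * (m * ‖x‖) := by ring
  have key : ‖A x + B x‖ * ‖A x + B x‖ ≤ (m * ‖x‖) * (m * ‖x‖) := by linarith
  nlinarith [norm_nonneg (A x + B x), mul_nonneg hm0 (norm_nonneg x)]

end Aux

theorem stmt12 {H : Type*} [NormedAddCommGroup H] [InnerProductSpace ℂ H] [CompleteSpace H]
    (M₁ M₂ N₁ N₂ : Submodule ℂ H)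
    (hM₁ : IsClosed (M₁ : Set H)) (hM₂ : IsClosed (M₂ : Set H))
    (hN₁ : IsClosed (N₁ : Set H)) (hN₂ : IsClosed (N₂ : Set H))
    (hMM : ∀ x ∈ M₁, ∀ y ∈ M₂, (inner ℂ x y : ℂ) = 0)
    (hMN : ∀ x ∈ M₁, ∀ y ∈ N₂, (inner ℂ x y : ℂ) = 0)
    (hNM : ∀ x ∈ M₂, ∀ y ∈ N₁, (inner ℂ x y : ℂ) = 0)
    (hNN : ∀ x ∈ N₁, ∀ y ∈ N₂, (inner ℂ x y : ℂ) = 0) :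
    essFriedrichs (M₁ ⊔ M₂) (N₁ ⊔ N₂) =
      max (essFriedrichs M₁ N₁) (essFriedrichs M₂ N₂) := by
  haveI : CompleteSpace M₁ := hM₁.completeSpace_coe
  haveI : CompleteSpace M₂ := hM₂.completeSpace_coe
  haveI : CompleteSpace N₁ := hN₁.completeSpace_coe
  haveI : CompleteSpace N₂ := hN₂.completeSpace_coe
  haveI : CompleteSpace ↥(M₁ ⊓ N₁) := (hM₁.inter hN₁).completeSpace_coe
  haveI : CompleteSpace ↥(M₂ ⊓ N₂) := (hM₂.inter hN₂).completeSpace_coe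
  haveI : Submodule.HasOrthogonalProjection (M₁ ⊔ M₂) := hasOrthogonalProjection_sup _ _ hMM
  haveI : Submodule.HasOrthogonalProjection (N₁ ⊔ N₂) := hasOrthogonalProjection_sup _ _ hNN
  have hRR : ∀ x ∈ M₁ ⊓ N₁, ∀ y ∈ M₂ ⊓ N₂, (inner ℂ x y : ℂ) = 0 :=
    fun x hx y hy => hMM x hx.1 y hy.1
  haveI : Submodule.HasOrthogonalProjection ((M₁ ⊓ N₁) ⊔ (M₂ ⊓ N₂)) :=
    hasOrthogonalProjection_sup _ _ hRR
  -- the intersection splits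
  have hinf : (M₁ ⊔ M₂) ⊓ (N₁ ⊔ N₂) = (M₁ ⊓ N₁) ⊔ (M₂ ⊓ N₂) := by
    refine le_antisymm ?_ ?_
    · rintro x ⟨hxM, hxN⟩
      rcases Submodule.mem_sup.1 hxM with ⟨m₁, hm₁, m₂, hm₂, rfl⟩
      rcases Submodule.mem_sup.1 hxN with ⟨n₁, hn₁, n₂, hn₂, hx⟩
      have hdiff : m₁ - n₁ = n₂ - m₂ := by
        have h := hx.symm
        linear_combination (norm := abel) h
      have hzero : (inner ℂ (m₁ - n₁) (m₁ - n₁) : ℂ) = 0 := by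
        nth_rewrite 2 [hdiff]
        rw [inner_sub_left, inner_sub_right, inner_sub_right]
        rw [hMN m₁ hm₁ n₂ hn₂, hMM m₁ hm₁ m₂ hm₂, hNN n₁ hn₁ n₂ hn₂,
          inner_eq_zero_symm.1 (hNM m₂ hm₂ n₁ hn₁)]
        ring
      have hmn : m₁ = n₁ := sub_eq_zero.1 (inner_self_eq_zero.1 hzero)
      have hmn2 : m₂ = n₂ := by
        rw [hmn] at hx
        exact (add_left_cancel hx).symm
      exact Submodule.add_mem_sup ⟨hm₁, hmn ▸ hn₁⟩ ⟨hm₂, hmn2 ▸ hn₂⟩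
    · exact sup_le (le_inf (inf_le_left.trans le_sup_left) (inf_le_right.trans le_sup_left))
        (le_inf (inf_le_left.trans le_sup_right) (inf_le_right.trans le_sup_right))
  haveI : Submodule.HasOrthogonalProjection ((M₁ ⊔ M₂) ⊓ (N₁ ⊔ N₂)) := by
    rw [hinf]; infer_instance
  -- vanishing projections
  have hz_N₂M₁ : ∀ y ∈ N₂, proj M₁ y = 0 := fun y hy =>
    proj_eq_zero _ ((Submodule.mem_orthogonal _ _).2 fun u hu => hMN u hu y hy)
  have hz_N₁M₂ : ∀ y ∈ N₁, proj M₂ y = 0 := fun y hy =>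
    proj_eq_zero _ ((Submodule.mem_orthogonal _ _).2 fun u hu => hNM u hu y hy)
  have hz_M₂M₁ : ∀ y ∈ M₂, proj M₁ y = 0 := fun y hy =>
    proj_eq_zero _ ((Submodule.mem_orthogonal _ _).2 fun u hu => hMM u hu y hy)
  have hz_M₁M₂ : ∀ y ∈ M₁, proj M₂ y = 0 := fun y hy =>
    proj_eq_zero _ ((Submodule.mem_orthogonal _ _).2 fun u hu =>
      inner_eq_zero_symm.1 (hMM y hy u hu))
  set T₁ : H →L[ℂ] H := proj M₁ * proj N₁ - proj (M₁ ⊓ N₁) with hT₁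
  set T₂ : H →L[ℂ] H := proj M₂ * proj N₂ - proj (M₂ ⊓ N₂) with hT₂
  have hiInf₁ : essFriedrichs M₁ N₁ =
      ⨅ K : {T : H →L[ℂ] H // IsCompactOperator ⇑T}, ‖T₁ + (K : H →L[ℂ] H)‖ := rfl
  have hiInf₂ : essFriedrichs M₂ N₂ =
      ⨅ K : {T : H →L[ℂ] H // IsCompactOperator ⇑T}, ‖T₂ + (K : H →L[ℂ] H)‖ := rfl
  -- splitting of the big operator
  have hsplit : proj (M₁ ⊔ M₂) * proj (N₁ ⊔ N₂) - proj ((M₁ ⊔ M₂) ⊓ (N₁ ⊔ N₂)) = T₁ + T₂ := by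
    ext x
    have e₁ : proj ((M₁ ⊔ M₂) ⊓ (N₁ ⊔ N₂)) x = proj (M₁ ⊓ N₁) x + proj (M₂ ⊓ N₂) x := by
      rw [hinf]; exact proj_sup_apply _ _ hRR x
    simp only [hT₁, hT₂, ContinuousLinearMap.sub_apply, ContinuousLinearMap.add_apply,
      ContinuousLinearMap.mul_apply]
    rw [proj_sup_apply N₁ N₂ hNN x, map_add, proj_sup_apply M₁ M₂ hMM,
      proj_sup_apply M₁ M₂ hMM, hz_N₂M₁ _ (proj_mem N₂ x), hz_N₁M₂ _ (proj_mem N₁ x), e₁]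
    abel
  have hiInfS : essFriedrichs (M₁ ⊔ M₂) (N₁ ⊔ N₂) =
      ⨅ K : {T : H →L[ℂ] H // IsCompactOperator ⇑T}, ‖T₁ + T₂ + (K : H →L[ℂ] H)‖ := by
    rw [essFriedrichs, hsplit]
  -- facts about T₁, T₂
  have hT₁mem : ∀ x, T₁ x ∈ M₁ := by
    intro x
    rw [hT₁]
    exact M₁.sub_mem (proj_mem M₁ _)
      ((inf_le_left : M₁ ⊓ N₁ ≤ M₁) (proj_mem (M₁ ⊓ N₁) x))
  have hT₂mem : ∀ x, T₂ x ∈ M₂ := by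
    intro x
    rw [hT₂]
    exact M₂.sub_mem (proj_mem M₂ _)
      ((inf_le_left : M₂ ⊓ N₂ ≤ M₂) (proj_mem (M₂ ⊓ N₂) x))
  have hprojinf₁ : ∀ x, proj (M₁ ⊓ N₁) (proj N₁ x) = proj (M₁ ⊓ N₁) x := by
    intro x
    have h0 : proj (M₁ ⊓ N₁) (x - proj N₁ x) = 0 :=
      proj_eq_zero _ (Submodule.orthogonal_le inf_le_right (sub_proj_mem N₁ x))
    have h1 : proj (M₁ ⊓ N₁) x - proj (M₁ ⊓ N₁) (proj N₁ x) = 0 := by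
      rw [← map_sub]; exact h0
    exact (sub_eq_zero.1 h1).symm
  have hprojinf₂ : ∀ x, proj (M₂ ⊓ N₂) (proj N₂ x) = proj (M₂ ⊓ N₂) x := by
    intro x
    have h0 : proj (M₂ ⊓ N₂) (x - proj N₂ x) = 0 :=
      proj_eq_zero _ (Submodule.orthogonal_le inf_le_right (sub_proj_mem N₂ x))
    have h1 : proj (M₂ ⊓ N₂) x - proj (M₂ ⊓ N₂) (proj N₂ x) = 0 := by
      rw [← map_sub]; exact h0
    exact (sub_eq_zero.1 h1).symm
  have hT₁Q : ∀ x, T₁ (proj N₁ x) = T₁ x := by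
    intro x
    simp only [hT₁, ContinuousLinearMap.sub_apply, ContinuousLinearMap.mul_apply]
    rw [proj_eq_self N₁ (proj_mem N₁ x), hprojinf₁ x]
  have hT₂Q : ∀ x, T₂ (proj N₂ x) = T₂ x := by
    intro x
    simp only [hT₂, ContinuousLinearMap.sub_apply, ContinuousLinearMap.mul_apply]
    rw [proj_eq_self N₂ (proj_mem N₂ x), hprojinf₂ x]
  have hT₁P : ∀ x, proj M₁ (T₁ x) = T₁ x := fun x => proj_eq_self _ (hT₁mem x)
  have hT₂P : ∀ x, proj M₂ (T₂ x) = T₂ x := fun x => proj_eq_self _ (hT₂mem x)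
  have hT₂P0 : ∀ x, proj M₁ (T₂ x) = 0 := fun x => hz_M₂M₁ _ (hT₂mem x)
  have hT₁P0 : ∀ x, proj M₂ (T₁ x) = 0 := fun x => hz_M₁M₂ _ (hT₁mem x)
  -- sandwich identities
  have hsand₁ : ∀ K : H →L[ℂ] H, (proj M₁).comp ((T₁ + T₂ + K).comp (proj N₁)) =
      T₁ + (proj M₁).comp (K.comp (proj N₁)) := by
    intro K; ext x
    simp only [ContinuousLinearMap.comp_apply, ContinuousLinearMap.add_apply, map_add]
    rw [hT₁Q x, hT₁P x, hT₂P0]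
    abel
  have hsand₂ : ∀ K : H →L[ℂ] H, (proj M₂).comp ((T₁ + T₂ + K).comp (proj N₂)) =
      T₂ + (proj M₂).comp (K.comp (proj N₂)) := by
    intro K; ext x
    simp only [ContinuousLinearMap.comp_apply, ContinuousLinearMap.add_apply, map_add]
    rw [hT₂Q x, hT₂P x, hT₁P0]
    abel
  have hsand₁' : ∀ K : H →L[ℂ] H, (proj M₁).comp ((T₁ + K).comp (proj N₁)) =
      T₁ + (proj M₁).comp (K.comp (proj N₁)) := by
    intro K; ext x
    simp only [ContinuousLinearMap.comp_apply, ContinuousLinearMap.add_apply, map_add]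
    rw [hT₁Q x, hT₁P x]
  have hsand₂' : ∀ K : H →L[ℂ] H, (proj M₂).comp ((T₂ + K).comp (proj N₂)) =
      T₂ + (proj M₂).comp (K.comp (proj N₂)) := by
    intro K; ext x
    simp only [ContinuousLinearMap.comp_apply, ContinuousLinearMap.add_apply, map_add]
    rw [hT₂Q x, hT₂P x]
  -- compactness and boundedness
  haveI : Nonempty {T : H →L[ℂ] H // IsCompactOperator ⇑T} :=
    ⟨⟨0, by
      have h0 : ⇑(0 : H →L[ℂ] H) = (0 : H → H) := rfl
      rw [h0]; exact isCompactOperator_zero⟩⟩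
  have bdd : ∀ X : H →L[ℂ] H, BddBelow (Set.range
      fun K : {T : H →L[ℂ] H // IsCompactOperator ⇑T} => ‖X + (K : H →L[ℂ] H)‖) := by
    intro X
    refine ⟨0, ?_⟩
    rintro y ⟨K, rfl⟩
    exact norm_nonneg _
  have hcK : ∀ (K : H →L[ℂ] H) (A B : Submodule ℂ H), IsCompactOperator ⇑K →
      IsCompactOperator ⇑((proj A).comp (K.comp (proj B))) := by
    intro K A B hK
    have h1 : IsCompactOperator (⇑K ∘ ⇑(proj B)) := hK.comp_clm (proj B)
    have h2 : IsCompactOperator (⇑(proj A) ∘ (⇑K ∘ ⇑(proj B))) := h1.clm_comp (proj A)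
    simpa [ContinuousLinearMap.coe_comp, Function.comp_assoc] using h2
  -- lower bounds
  have hle₁ : essFriedrichs M₁ N₁ ≤ essFriedrichs (M₁ ⊔ M₂) (N₁ ⊔ N₂) := by
    rw [hiInfS, hiInf₁]
    refine le_ciInf fun K => ?_
    have hK' : IsCompactOperator
        ⇑((proj M₁).comp (((K : H →L[ℂ] H)).comp (proj N₁))) := hcK _ _ _ K.2
    calc (⨅ K : {T : H →L[ℂ] H // IsCompactOperator ⇑T}, ‖T₁ + (K : H →L[ℂ] H)‖)
        ≤ ‖T₁ + ((proj M₁).comp (((K : H →L[ℂ] H)).comp (proj N₁)))‖ :=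
          ciInf_le (bdd T₁) ⟨_, hK'⟩
      _ = ‖(proj M₁).comp ((T₁ + T₂ + (K : H →L[ℂ] H)).comp (proj N₁))‖ := by
          rw [hsand₁]
      _ ≤ ‖T₁ + T₂ + (K : H →L[ℂ] H)‖ := norm_proj_comp_proj_le _ _ _
  have hle₂ : essFriedrichs M₂ N₂ ≤ essFriedrichs (M₁ ⊔ M₂) (N₁ ⊔ N₂) := by
    rw [hiInfS, hiInf₂]
    refine le_ciInf fun K => ?_
    have hK' : IsCompactOperator
        ⇑((proj M₂).comp (((K : H →L[ℂ] H)).comp (proj N₂))) := hcK _ _ _ K.2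
    calc (⨅ K : {T : H →L[ℂ] H // IsCompactOperator ⇑T}, ‖T₂ + (K : H →L[ℂ] H)‖)
        ≤ ‖T₂ + ((proj M₂).comp (((K : H →L[ℂ] H)).comp (proj N₂)))‖ :=
          ciInf_le (bdd T₂) ⟨_, hK'⟩
      _ = ‖(proj M₂).comp ((T₁ + T₂ + (K : H →L[ℂ] H)).comp (proj N₂))‖ := by
          rw [hsand₂]
      _ ≤ ‖T₁ + T₂ + (K : H →L[ℂ] H)‖ := norm_proj_comp_proj_le _ _ _
  -- upper bound
  have hub : essFriedrichs (M₁ ⊔ M₂) (N₁ ⊔ N₂) ≤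
      max (essFriedrichs M₁ N₁) (essFriedrichs M₂ N₂) := by
    refine le_of_forall_sub_le fun ε hε => ?_
    rw [sub_le_iff_le_add]
    have h1 : (⨅ K : {T : H →L[ℂ] H // IsCompactOperator ⇑T}, ‖T₁ + (K : H →L[ℂ] H)‖)
        < essFriedrichs M₁ N₁ + ε := by rw [← hiInf₁]; linarith
    obtain ⟨K₁, hK₁⟩ := exists_lt_of_ciInf_lt h1
    have h2 : (⨅ K : {T : H →L[ℂ] H // IsCompactOperator ⇑T}, ‖T₂ + (K : H →L[ℂ] H)‖)
        < essFriedrichs M₂ N₂ + ε := by rw [← hiInf₂]; linarith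
    obtain ⟨K₂, hK₂⟩ := exists_lt_of_ciInf_lt h2
    set A : H →L[ℂ] H := T₁ + (proj M₁).comp (((K₁ : H →L[ℂ] H)).comp (proj N₁)) with hA
    set B : H →L[ℂ] H := T₂ + (proj M₂).comp (((K₂ : H →L[ℂ] H)).comp (proj N₂)) with hB
    have hAnorm : ‖A‖ < essFriedrichs M₁ N₁ + ε := by
      calc ‖A‖ = ‖(proj M₁).comp ((T₁ + (K₁ : H →L[ℂ] H)).comp (proj N₁))‖ := by
            rw [hA, hsand₁']
        _ ≤ ‖T₁ + (K₁ : H →L[ℂ] H)‖ := norm_proj_comp_proj_le _ _ _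
        _ < _ := hK₁
    have hBnorm : ‖B‖ < essFriedrichs M₂ N₂ + ε := by
      calc ‖B‖ = ‖(proj M₂).comp ((T₂ + (K₂ : H →L[ℂ] H)).comp (proj N₂))‖ := by
            rw [hB, hsand₂']
        _ ≤ ‖T₂ + (K₂ : H →L[ℂ] H)‖ := norm_proj_comp_proj_le _ _ _
        _ < _ := hK₂
    have hAmem : ∀ x, A x ∈ M₁ := by
      intro x
      rw [hA]
      exact M₁.add_mem (hT₁mem x) (proj_mem M₁ _)
    have hBmem : ∀ x, B x ∈ M₂ := by
      intro x
      rw [hB]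
      exact M₂.add_mem (hT₂mem x) (proj_mem M₂ _)
    have hAQ : ∀ x, A (proj N₁ x) = A x := by
      intro x
      simp only [hA, ContinuousLinearMap.add_apply, ContinuousLinearMap.comp_apply]
      rw [hT₁Q x, proj_eq_self N₁ (proj_mem N₁ x)]
    have hBQ : ∀ x, B (proj N₂ x) = B x := by
      intro x
      simp only [hB, ContinuousLinearMap.add_apply, ContinuousLinearMap.comp_apply]
      rw [hT₂Q x, proj_eq_self N₂ (proj_mem N₂ x)]
    have hmax : ‖A + B‖ ≤ max ‖A‖ ‖B‖ :=
      norm_add_le_max_aux hMM hNN hAmem hBmem hAQ hBQ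
    have hKsum : IsCompactOperator
        ⇑((proj M₁).comp (((K₁ : H →L[ℂ] H)).comp (proj N₁)) +
          (proj M₂).comp (((K₂ : H →L[ℂ] H)).comp (proj N₂))) := by
      have := (hcK _ M₁ N₁ K₁.2).add (hcK _ M₂ N₂ K₂.2)
      simpa using this
    calc essFriedrichs (M₁ ⊔ M₂) (N₁ ⊔ N₂)
        ≤ ‖T₁ + T₂ + ((proj M₁).comp (((K₁ : H →L[ℂ] H)).comp (proj N₁)) +
            (proj M₂).comp (((K₂ : H →L[ℂ] H)).comp (proj N₂)))‖ := by
          rw [hiInfS]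
          exact ciInf_le (bdd _) ⟨_, hKsum⟩
      _ = ‖A + B‖ := by rw [hA, hB]; congr 1; abel
      _ ≤ max ‖A‖ ‖B‖ := hmax
      _ ≤ max (essFriedrichs M₁ N₁ + ε) (essFriedrichs M₂ N₂ + ε) :=
          max_le_max hAnorm.le hBnorm.le
      _ = max (essFriedrichs M₁ N₁) (essFriedrichs M₂ N₂) + ε := max_add_add_right _ _ _
  exact le_antisymm hub (max_le hle₁ hle₂)
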